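/- Suppose C^∞ ∩ A⁻¹(D^∞) = {0}. Let r_C = 2 if C is convex and r_C = 1 otherwise, and let L > ‖A‖²/r_C. Let x⁰ ∈ C and let {x^t} be any sequence such that for every t ≥ 0 there exists η^t ∈ Proj_D(Ax^t) with x^{t+1} ∈ Proj_C(x^t − Aᵀ(Ax^t − η^t)/L) (the fixed-stepsize algorithm SpFeas_DC). Then every accumulation point x* of {x^t} is a stationary point of the split feasibility problem: x* ∈ C and there exists η* ∈ Proj_D(Ax*) with Aᵀ(η* − Ax*) ∈ N_C(x*). -/
import Mathlib


open Filter Topology Metric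
open scoped RealInnerProductSpace

noncomputable section

/-- The set of projections of `y` onto `S`. -/
def projSet {E : Type*} [NormedAddCommGroup E] (S : Set E) (y : E) : Set E :=
  {z | z ∈ S ∧ dist y z = Metric.infDist y S}

/-- The horizon cone of `S`. -/
def horizonCone {E : Type*} [NormedAddCommGroup E] [NormedSpace ℝ E] (S : Set E) : Set E :=
  {x | ∃ (u : ℕ → E) (β : ℕ → ℝ), (∀ t, u t ∈ S) ∧ (∀ t, 0 < β t) ∧
    Tendsto β atTop (𝓝 (0 : ℝ)) ∧ Tendsto (fun t => β t • u t) atTop (𝓝 x)}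

/-- The regular (Fréchet) normal cone to `S` at `x`. -/
def regNormalCone {E : Type*} [NormedAddCommGroup E] [InnerProductSpace ℝ E]
    (S : Set E) (x : E) : Set E :=
  {v | x ∈ S ∧ ∀ ε > 0, ∃ δ > 0, ∀ u ∈ S, ‖u - x‖ < δ → ⟪v, u - x⟫ ≤ ε * ‖u - x‖}

/-- The limiting normal cone to `S` at `x`. -/
def normalCone {E : Type*} [NormedAddCommGroup E] [InnerProductSpace ℝ E]
    (S : Set E) (x : E) : Set E :=
  {v | x ∈ S ∧ ∃ (xs vs : ℕ → E), (∀ t, vs t ∈ regNormalCone S (xs t)) ∧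
    Tendsto xs atTop (𝓝 x) ∧ Tendsto vs atTop (𝓝 v)}

/-- The regular (Fréchet) subdifferential at `x` of the function `φ + δ_C`
(the real-valued function `φ` plus the indicator of `C`). -/
def regSubdiff {E : Type*} [NormedAddCommGroup E] [InnerProductSpace ℝ E]
    (φ : E → ℝ) (C : Set E) (x : E) : Set E :=
  {v | x ∈ C ∧ ∀ ε > 0, ∃ δ > 0, ∀ u ∈ C, ‖u - x‖ < δ →
      φ u - φ x - ⟪v, u - x⟫ ≥ -(ε * ‖u - x‖)}

/-- The limiting subdifferential at `x` of the function `φ + δ_C`. -/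
def limSubdiff {E : Type*} [NormedAddCommGroup E] [InnerProductSpace ℝ E]
    (φ : E → ℝ) (C : Set E) (x : E) : Set E :=
  {v | x ∈ C ∧ ∃ (xs vs : ℕ → E), (∀ t, vs t ∈ regSubdiff φ C (xs t)) ∧
    Tendsto xs atTop (𝓝 x) ∧ Tendsto (fun t => φ (xs t)) atTop (𝓝 (φ x)) ∧
    Tendsto vs atTop (𝓝 v)}

/-- The smooth part `x ↦ ½ d(Ax, D)²` of the split-feasibility objective
`F = ½ d(A·, D)² + δ_C`. -/
def phiF {n m : ℕ} (A : EuclideanSpace ℝ (Fin n) →L[ℝ] EuclideanSpace ℝ (Fin m))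
    (D : Set (EuclideanSpace ℝ (Fin m))) (x : EuclideanSpace ℝ (Fin n)) : ℝ :=
  Metric.infDist (A x) D ^ 2 / 2

/-- A polyhedral set: an intersection of finitely many closed half-spaces. -/
def IsPolyhedral {E : Type*} [NormedAddCommGroup E] [InnerProductSpace ℝ E] (S : Set E) : Prop :=
  ∃ (k : ℕ) (a : Fin k → E) (b : Fin k → ℝ), S = {x | ∀ i, ⟪a i, x⟫ ≤ b i}

end

lemma proj_mem_regNormalCone {E : Type*} [NormedAddCommGroup E] [InnerProductSpace ℝ E]
    {C : Set E} {y p : E} (hp : p ∈ projSet C y) {L : ℝ} (hL : 0 < L) :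
    L • (y - p) ∈ regNormalCone C p := by
  refine ⟨hp.1, fun ε hε => ⟨2 * ε / L, by positivity, fun u hu hd => ?_⟩⟩
  have h1 : ‖y - p‖ ≤ ‖y - u‖ := by
    rw [← dist_eq_norm, ← dist_eq_norm, hp.2]; exact infDist_le_dist_of_mem hu
  have h2 : ‖y - u‖ ^ 2 = ‖y - p‖ ^ 2 - 2 * ⟪y - p, u - p⟫ + ‖u - p‖ ^ 2 := by
    have h : y - u = (y - p) - (u - p) := by abel
    rw [h, norm_sub_sq_real]
  have h4 : ‖y - p‖ ^ 2 ≤ ‖y - u‖ ^ 2 := by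
    nlinarith [norm_nonneg (y - p), norm_nonneg (y - u)]
  have hd' : L * ‖u - p‖ < 2 * ε := by
    rw [lt_div_iff₀ hL] at hd; linarith [hd]
  rw [real_inner_smul_left]
  nlinarith [norm_nonneg (u - p), mul_nonneg (norm_nonneg (u - p)) (sub_nonneg.mpr hd'.le)]

set_option maxHeartbeats 2000000 in

/-- Under the horizon-cone condition, every accumulation point `x*` of the
sequence generated by `SpFeas_DC` is a stationary point of the split feasibility problem:
`x* ∈ C` and `Aᵀ(η* − Ax*) ∈ N_C(x*)` for some `η* ∈ Proj_D(Ax*)`. -/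
theorem stmt_8 (n m : ℕ)
    (A : EuclideanSpace ℝ (Fin n) →L[ℝ] EuclideanSpace ℝ (Fin m))
    (C : Set (EuclideanSpace ℝ (Fin n))) (D : Set (EuclideanSpace ℝ (Fin m)))
    (hCne : C.Nonempty) (hCcl : IsClosed C) (hDne : D.Nonempty) (hDcl : IsClosed D)
    (hhor : ∀ z, z ∈ horizonCone C → A z ∈ horizonCone D → z = 0)
    (rC L : ℝ) (hrC : (Convex ℝ C ∧ rC = 2) ∨ (¬ Convex ℝ C ∧ rC = 1))
    (hL : ‖A‖ ^ 2 / rC < L)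
    (x : ℕ → EuclideanSpace ℝ (Fin n)) (hx0 : x 0 ∈ C)
    (hstep : ∀ t : ℕ, ∃ η ∈ projSet D (A (x t)),
      x (t + 1) ∈ projSet C (x t - L⁻¹ • ((ContinuousLinearMap.adjoint A) (A (x t) - η)))) :
    ∀ xstar : EuclideanSpace ℝ (Fin n),
      (∃ σ : ℕ → ℕ, StrictMono σ ∧ Tendsto (fun t => x (σ t)) atTop (𝓝 xstar)) →
      xstar ∈ C ∧ ∃ ηstar ∈ projSet D (A xstar),
        (ContinuousLinearMap.adjoint A) (ηstar - A xstar) ∈ normalCone C xstar := by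
  choose η hη hproj using hstep
  have hrCpos : (0 : ℝ) < rC := by rcases hrC with ⟨_, h⟩ | ⟨_, h⟩ <;> rw [h] <;> norm_num
  have hLpos : 0 < L := lt_of_le_of_lt (div_nonneg (sq_nonneg _) hrCpos.le) hL
  have hA2 : ‖A‖ ^ 2 < rC * L := by
    rw [div_lt_iff₀ hrCpos] at hL; linarith
  set g : ℕ → EuclideanSpace ℝ (Fin n) :=
    fun t => (ContinuousLinearMap.adjoint A) (A (x t) - η t) with hg
  set Δ : ℕ → EuclideanSpace ℝ (Fin n) := fun t => x (t + 1) - x t with hΔdef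
  have hxC : ∀ t, x t ∈ C := by
    intro t; cases t with
    | zero => exact hx0
    | succ t => exact (hproj t).1
  -- key inner-product inequality
  have key : ∀ t, ⟪g t, Δ t⟫ ≤ -(rC * L / 2) * ‖Δ t‖ ^ 2 := by
    intro t
    set y : EuclideanSpace ℝ (Fin n) := x t - L⁻¹ • g t with hy
    have hiLL : L * L⁻¹ = 1 := mul_inv_cancel₀ hLpos.ne'
    rcases hrC with ⟨hconv, hrc⟩ | ⟨-, hrc⟩
    · -- convex case, rC = 2
      have hnorm : ‖y - x (t + 1)‖ = ⨅ w : C, ‖y - ↑w‖ := by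
        have := (hproj t).2
        rw [dist_eq_norm, infDist_eq_iInf] at this
        simp only [dist_eq_norm] at this
        exact this
      have hineq := (norm_eq_iInf_iff_real_inner_le_zero hconv (hproj t).1).mp hnorm
        (x t) (hxC t)
      have e1 : y - x (t + 1) = -(Δ t) - L⁻¹ • g t := by
        simp only [hy, hΔdef]; abel
      have e2 : x t - x (t + 1) = -(Δ t) := by simp only [hΔdef]; abel
      rw [e1, e2] at hineq
      have hexp : ⟪-(Δ t) - L⁻¹ • g t, -(Δ t)⟫ = ‖Δ t‖ ^ 2 + L⁻¹ * ⟪g t, Δ t⟫ := by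
        rw [inner_sub_left, inner_neg_neg, real_inner_self_eq_norm_sq,
          inner_neg_right, real_inner_smul_left]
        ring
      rw [hexp] at hineq
      rw [hrc]
      have h5 := mul_le_mul_of_nonneg_left hineq hLpos.le
      rw [mul_add, ← mul_assoc, hiLL, one_mul, mul_zero] at h5
      linarith
    · -- nonconvex case, rC = 1
      have h1 : ‖y - x (t + 1)‖ ≤ ‖y - x t‖ := by
        rw [← dist_eq_norm, ← dist_eq_norm, (hproj t).2]
        exact infDist_le_dist_of_mem (hxC t)
      have e1 : y - x (t + 1) = -(Δ t + L⁻¹ • g t) := by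
        simp only [hy, hΔdef]; abel
      have e2 : y - x t = -(L⁻¹ • g t) := by simp only [hy]; abel
      rw [e1, e2, norm_neg, norm_neg] at h1
      have h2 : ‖Δ t + L⁻¹ • g t‖ ^ 2 ≤ ‖L⁻¹ • g t‖ ^ 2 := by
        nlinarith [norm_nonneg (Δ t + L⁻¹ • g t), norm_nonneg (L⁻¹ • g t)]
      rw [norm_add_sq_real, real_inner_smul_right] at h2
      rw [hrc]
      have hc : ⟪Δ t, g t⟫ = ⟪g t, Δ t⟫ := real_inner_comm _ _
      have h2' : ‖Δ t‖ ^ 2 + 2 * (L⁻¹ * ⟪Δ t, g t⟫) ≤ 0 := by linarith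
      have h5 := mul_le_mul_of_nonneg_left h2' hLpos.le
      rw [mul_add, mul_zero, show L * (2 * (L⁻¹ * ⟪Δ t, g t⟫))
        = 2 * ((L * L⁻¹) * ⟪Δ t, g t⟫) from by ring, hiLL, one_mul] at h5
      rw [hc] at h5
      linarith
  -- descent
  set φ : ℕ → ℝ := fun t => infDist (A (x t)) D ^ 2 / 2 with hφdef
  set c : ℝ := (rC * L - ‖A‖ ^ 2) / 2 with hcdef
  have hcpos : 0 < c := by rw [hcdef]; linarith
  have descent : ∀ t, φ (t + 1) + c * ‖Δ t‖ ^ 2 ≤ φ t := by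
    intro t
    have h1 : infDist (A (x (t + 1))) D ≤ ‖A (x (t + 1)) - η t‖ := by
      rw [← dist_eq_norm]; exact infDist_le_dist_of_mem (hη t).1
    have h2 : ‖A (x t) - η t‖ = infDist (A (x t)) D := by
      rw [← dist_eq_norm]; exact (hη t).2
    have h3 : A (x (t + 1)) - η t = (A (x t) - η t) + A (Δ t) := by
      simp only [hΔdef, map_sub]; abel
    have h4 : ‖A (x (t + 1)) - η t‖ ^ 2
        = ‖A (x t) - η t‖ ^ 2 + 2 * ⟪A (x t) - η t, A (Δ t)⟫ + ‖A (Δ t)‖ ^ 2 := by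
      rw [h3, norm_add_sq_real]
    have h5 : ⟪A (x t) - η t, A (Δ t)⟫ = ⟪g t, Δ t⟫ :=
      (ContinuousLinearMap.adjoint_inner_left A (Δ t) (A (x t) - η t)).symm
    have h6 : ‖A (Δ t)‖ ≤ ‖A‖ * ‖Δ t‖ := A.le_opNorm _
    have h6' : ‖A (Δ t)‖ ^ 2 ≤ ‖A‖ ^ 2 * ‖Δ t‖ ^ 2 := by
      rw [← mul_pow]; exact pow_le_pow_left₀ (norm_nonneg _) h6 2
    have h7 : infDist (A (x (t + 1))) D ^ 2 ≤ ‖A (x (t + 1)) - η t‖ ^ 2 :=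
      pow_le_pow_left₀ infDist_nonneg h1 2
    have hk := key t
    rw [h5] at h4
    have h2sq : ‖A (x t) - η t‖ ^ 2 = infDist (A (x t)) D ^ 2 := by rw [h2]
    rw [h2sq] at h4
    simp only [hφdef, hcdef]
    linarith [h7, h4, h6', hk]
  have hφ0 : ∀ t, (0 : ℝ) ≤ φ t := fun t => by positivity
  -- summability and Δ → 0
  have htel : ∀ T, c * ∑ i ∈ Finset.range T, ‖Δ i‖ ^ 2 + φ T ≤ φ 0 := by
    intro T
    induction T with
    | zero => simp
    | succ T ih =>
      rw [Finset.sum_range_succ, mul_add]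
      linarith [descent T, ih]
  have hsumm : Summable fun t => ‖Δ t‖ ^ 2 := by
    refine summable_of_sum_range_le (c := φ 0 / c) (fun n => sq_nonneg _) (fun T => ?_)
    rw [le_div_iff₀ hcpos]
    have := htel T
    linarith [hφ0 T]
  have hΔ0 : Tendsto Δ atTop (𝓝 0) := by
    rw [tendsto_zero_iff_norm_tendsto_zero]
    have h := hsumm.tendsto_atTop_zero
    have h2 : Tendsto (fun t => Real.sqrt (‖Δ t‖ ^ 2)) atTop (𝓝 (Real.sqrt 0)) :=
      (Real.continuous_sqrt.tendsto 0).comp h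
    simpa [Real.sqrt_sq (norm_nonneg _)] using h2
  have hφle : ∀ t, φ t ≤ φ 0 := by
    intro t
    have := htel t
    have : 0 ≤ c * ∑ i ∈ Finset.range t, ‖Δ i‖ ^ 2 :=
      mul_nonneg hcpos.le (Finset.sum_nonneg fun i _ => sq_nonneg _)
    linarith [htel t]
  -- accumulation point
  rintro xstar ⟨σ, hσ, hconv⟩
  have hxsC : xstar ∈ C := hCcl.mem_of_tendsto hconv (Eventually.of_forall fun t => hxC _)
  have hAconv : Tendsto (fun t => A (x (σ t))) atTop (𝓝 (A xstar)) :=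
    (A.continuous.tendsto _).comp hconv
  obtain ⟨M, hM⟩ := hAconv.norm.bddAbove_range
  simp only [mem_upperBounds, Set.mem_range, forall_exists_index] at hM
  have hinfb : ∀ t, infDist (A (x t)) D ≤ Real.sqrt (2 * φ 0) := by
    intro t
    have h1 : infDist (A (x t)) D ^ 2 ≤ 2 * φ 0 := by
      have := hφle t; simp only [hφdef] at this ⊢; linarith
    calc infDist (A (x t)) D = Real.sqrt (infDist (A (x t)) D ^ 2) :=
          (Real.sqrt_sq infDist_nonneg).symm
      _ ≤ Real.sqrt (2 * φ 0) := Real.sqrt_le_sqrt h1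
  have hηball : ∀ t, η (σ t) ∈ Metric.closedBall (0 : EuclideanSpace ℝ (Fin m))
      (M + Real.sqrt (2 * φ 0)) := by
    intro t
    rw [Metric.mem_closedBall, dist_zero_right]
    have e : η (σ t) = A (x (σ t)) + (η (σ t) - A (x (σ t))) := by abel
    have h1 : ‖η (σ t)‖ ≤ ‖A (x (σ t))‖ + ‖η (σ t) - A (x (σ t))‖ := by
      nth_rewrite 1 [e]; exact norm_add_le _ _
    have h2 : ‖η (σ t) - A (x (σ t))‖ = infDist (A (x (σ t))) D := by
      rw [norm_sub_rev, ← dist_eq_norm]; exact (hη (σ t)).2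
    have h3 := hM _ t rfl
    calc ‖η (σ t)‖ ≤ ‖A (x (σ t))‖ + ‖η (σ t) - A (x (σ t))‖ := h1
      _ ≤ M + Real.sqrt (2 * φ 0) := by rw [h2]; exact add_le_add h3 (hinfb _)
  obtain ⟨ηstar, -, τ, hτ, hηconv⟩ :=
    tendsto_subseq_of_bounded Metric.isBounded_closedBall hηball
  set ρ : ℕ → ℕ := σ ∘ τ with hρdef
  have hρ : StrictMono ρ := hσ.comp hτ
  have hxρ : Tendsto (fun t => x (ρ t)) atTop (𝓝 xstar) := hconv.comp hτ.tendsto_atTop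
  have hΔρ : Tendsto (fun t => Δ (ρ t)) atTop (𝓝 0) := hΔ0.comp hρ.tendsto_atTop
  have hxρ1 : Tendsto (fun t => x (ρ t + 1)) atTop (𝓝 xstar) := by
    have h := hxρ.add hΔρ
    simp only [add_zero] at h
    convert h using 2 with t
    simp [hΔdef]
  have hηρ : Tendsto (fun t => η (ρ t)) atTop (𝓝 ηstar) := hηconv
  have hηstarD : ηstar ∈ D :=
    hDcl.mem_of_tendsto hηρ (Eventually.of_forall fun t => (hη _).1)
  have hAxρ : Tendsto (fun t => A (x (ρ t))) atTop (𝓝 (A xstar)) :=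
    (A.continuous.tendsto _).comp hxρ
  have hdist : Tendsto (fun t => dist (A (x (ρ t))) (η (ρ t))) atTop
      (𝓝 (dist (A xstar) ηstar)) := hAxρ.dist hηρ
  have hinf : Tendsto (fun t => infDist (A (x (ρ t))) D) atTop
      (𝓝 (infDist (A xstar) D)) := ((continuous_infDist_pt D).tendsto _).comp hAxρ
  have heqfun : (fun t => dist (A (x (ρ t))) (η (ρ t)))
      = fun t => infDist (A (x (ρ t))) D := funext fun t => (hη (ρ t)).2
  have heq : dist (A xstar) ηstar = infDist (A xstar) D :=
    tendsto_nhds_unique (heqfun ▸ hdist) hinf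
  refine ⟨hxsC, ηstar, ⟨hηstarD, heq⟩, hxsC, (fun t => x (ρ t + 1)),
    (fun t => L • (x (ρ t) - L⁻¹ • g (ρ t) - x (ρ t + 1))), fun t => ?_, hxρ1, ?_⟩
  · exact proj_mem_regNormalCone (hproj (ρ t)) hLpos
  · have hrw : ∀ t, L • (x (ρ t) - L⁻¹ • g (ρ t) - x (ρ t + 1))
        = L • (-(Δ (ρ t))) - g (ρ t) := by
      intro t
      have hLg : L • (L⁻¹ • g (ρ t)) = g (ρ t) := by
        rw [smul_smul, mul_inv_cancel₀ hLpos.ne', one_smul]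
      have e : x (ρ t) - L⁻¹ • g (ρ t) - x (ρ t + 1) = -(Δ (ρ t)) - L⁻¹ • g (ρ t) := by
        simp only [hΔdef]; abel
      rw [e, smul_sub, hLg]
    simp only [hrw]
    have h1 : Tendsto (fun t => L • (-(Δ (ρ t)))) atTop (𝓝 (0 : EuclideanSpace ℝ (Fin n))) := by
      have := (hΔρ.neg).const_smul L
      simpa using this
    have h2 : Tendsto (fun t => g (ρ t)) atTop
        (𝓝 ((ContinuousLinearMap.adjoint A) (A xstar - ηstar))) :=
      ((ContinuousLinearMap.adjoint A).continuous.tendsto _).comp (hAxρ.sub hηρ)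
    have h3 := h1.sub h2
    have e : (ContinuousLinearMap.adjoint A) (ηstar - A xstar)
        = 0 - (ContinuousLinearMap.adjoint A) (A xstar - ηstar) := by
      rw [map_sub, map_sub]; abel
    rw [e]
    exact h3
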